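/- Let p ≥ 2 be a natural number and let f : ℝ → ℝ be defined by f(x) = ∫_0^x (1 - t^p)^(-(p-1)/p) dt. Then there exists a function g : ℝ → ℝ that is analytic at 0, with g(0) = 0, such that f(g(x)) = x for all x in some neighborhood of 0. (That is, the generalized sine function sin_p, which is the local inverse of arcsin_p at 0, is analytic at 0.) -/

import Mathlib

open Real intervalIntegral Filter
open scoped Topology ENNReal NNReal

/-- A function analytic at `0` has a primitive analytic at `0`. -/
lemma exists_primitive_analytic (h : ℝ → ℝ) (hA : AnalyticAt ℝ h 0) :
    ∃ F : ℝ → ℝ, AnalyticAt ℝ F 0 ∧ F 0 = 0 ∧ ∀ᶠ x in 𝓝 (0 : ℝ), HasDerivAt F (h x) x := by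
  obtain ⟨P, hP⟩ := hA
  obtain ⟨r', h0r', hr'P⟩ : ∃ r' : ℝ≥0, 0 < r' ∧ (r' : ℝ≥0∞) < P.radius := by
    rcases ENNReal.lt_iff_exists_nnreal_btwn.1 hP.radius_pos with ⟨r', h1, h2⟩
    exact ⟨r', by exact_mod_cast h1, h2⟩
  obtain ⟨C, hC0, hC⟩ := P.norm_mul_pow_le_of_lt_radius hr'P
  set a : ℕ → ℝ := P.coeff with ha
  have habound : ∀ n, |a n| * (r' : ℝ) ^ n ≤ C := by
    intro n
    have h1 : |a n| ≤ ‖P n‖ := by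
      have h2 := (P n).le_opNorm (fun _ => (1 : ℝ))
      rw [FormalMultilinearSeries.apply_eq_pow_smul_coeff] at h2
      simp [ha]
    calc |a n| * (r' : ℝ) ^ n ≤ ‖P n‖ * (r' : ℝ) ^ n := by
          exact mul_le_mul_of_nonneg_right h1 (by positivity)
      _ ≤ C := hC n
  set ρ : ℝ := (r' : ℝ) / 2 with hρ
  have hρpos : 0 < ρ := by positivity
  set u : ℕ → ℝ := fun n => C * (1 / 2) ^ n with hu'
  have hu : Summable u := (summable_geometric_two).mul_left C
  have hbound : ∀ (n : ℕ) (y : ℝ), |y| ≤ ρ → |a n * y ^ n| ≤ u n := by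
    intro n y hy
    have h1 : |a n * y ^ n| = |a n| * |y| ^ n := by
      rw [abs_mul, abs_pow]
    rw [h1]
    have h2 : |y| ^ n ≤ ρ ^ n := pow_le_pow_left₀ (abs_nonneg _) hy n
    have h3 : ρ ^ n = (r' : ℝ) ^ n * (1 / 2) ^ n := by
      rw [hρ, div_pow, one_div, inv_pow, div_eq_mul_inv]
    calc |a n| * |y| ^ n ≤ |a n| * ρ ^ n := by
          exact mul_le_mul_of_nonneg_left h2 (abs_nonneg _)
      _ = (|a n| * (r' : ℝ) ^ n) * (1 / 2) ^ n := by rw [h3]; ring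
      _ ≤ C * (1 / 2) ^ n := by
          exact mul_le_mul_of_nonneg_right (habound n) (by positivity)
  obtain ⟨r₁, hr₁, hs⟩ := Metric.eventually_nhds_iff.1 (hasFPowerSeriesAt_iff.1 hP)
  set δ : ℝ := min ρ r₁ with hδ
  have hδpos : 0 < δ := lt_min hρpos hr₁
  set t : Set ℝ := Set.Ioo (-δ) δ with ht
  have h0t : (0 : ℝ) ∈ t := by constructor <;> simp [hδpos] <;> linarith
  set g : ℕ → ℝ → ℝ := fun n z => (a n / ((n : ℝ) + 1)) * z ^ (n + 1) with hg'
  have hg : ∀ (n : ℕ) (y : ℝ), y ∈ t → HasDerivAt (g n) (a n * y ^ n) y := by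
    intro n y _
    have h1 := (hasDerivAt_pow (n + 1) y).const_mul (a n / ((n : ℝ) + 1))
    refine h1.congr_deriv ?_
    have : ((n : ℝ) + 1) ≠ 0 := by positivity
    push_cast
    rw [div_mul_eq_mul_div, div_eq_iff this]
    ring
  have hgb : ∀ (n : ℕ) (y : ℝ), y ∈ t → ‖a n * y ^ n‖ ≤ u n := by
    intro n y hy
    have : |y| ≤ ρ := by
      rw [abs_le]
      constructor
      · have := hy.1; have : -δ < y := hy.1
        have hδρ : δ ≤ ρ := min_le_left _ _
        linarith
      · have hδρ : δ ≤ ρ := min_le_left _ _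
        have := hy.2; linarith
    exact hbound n y this
  have hg0 : Summable fun n => g n 0 := by
    have : (fun n => g n 0) = fun _ => (0 : ℝ) := by
      funext n; simp [hg']
    rw [this]; exact summable_zero
  have key : ∀ y ∈ t, HasDerivAt (fun z => ∑' n, g n z) (∑' n, a n * y ^ n) y := by
    intro y hy
    exact hasDerivAt_tsum_of_isPreconnected hu isOpen_Ioo (convex_Ioo _ _).isPreconnected
      hg hgb h0t hg0 hy
  set F : ℝ → ℝ := fun z => ∑' n, g n z with hF'
  have hsum_h : ∀ y : ℝ, |y| < δ → HasSum (fun n => a n * y ^ n) (h y) := by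
    intro y hy
    have h1 : dist y 0 < r₁ := by
      rw [Real.dist_eq, sub_zero]
      exact lt_of_lt_of_le hy (min_le_right _ _)
    have h2 := hs h1
    simp only [zero_add] at h2
    have he : (fun n => a n * y ^ n) = fun n => y ^ n • P.coeff n := by
      funext n
      rw [smul_eq_mul]; ring
    rw [he]; exact h2
  have hFderiv : ∀ y ∈ t, HasDerivAt F (h y) y := by
    intro y hy
    have h1 := key y hy
    have h2 : |y| < δ := by rw [abs_lt]; exact ⟨hy.1, hy.2⟩
    rwa [(hsum_h y h2).tsum_eq] at h1
  have hgsummable : ∀ z : ℝ, |z| ≤ ρ → Summable fun n => g n z := by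
    intro z hz
    apply Summable.of_norm_bounded (hu.mul_right ρ)
    intro n
    have h1 : ‖g n z‖ = |a n / ((n : ℝ) + 1)| * |z| ^ (n + 1) := by
      rw [Real.norm_eq_abs, show g n z = a n / ((n : ℝ) + 1) * z ^ (n + 1) from rfl,
        abs_mul, abs_pow]
    rw [h1]
    have h2 : |a n / ((n : ℝ) + 1)| ≤ |a n| := by
      rw [abs_div]
      have : |((n : ℝ) + 1)| = (n : ℝ) + 1 := abs_of_pos (by positivity)
      rw [this]
      exact div_le_self (abs_nonneg _) (by norm_num)
    have h3 : |z| ^ (n + 1) ≤ ρ ^ n * ρ := by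
      rw [pow_succ]
      exact mul_le_mul (pow_le_pow_left₀ (abs_nonneg _) hz n) hz (abs_nonneg _) (by positivity)
    calc |a n / ((n : ℝ) + 1)| * |z| ^ (n + 1) ≤ |a n| * (ρ ^ n * ρ) := by
          exact mul_le_mul h2 h3 (by positivity) (abs_nonneg _)
      _ = (|a n| * ρ ^ n) * ρ := by ring
      _ ≤ u n * ρ := by
          apply mul_le_mul_of_nonneg_right _ hρpos.le
          calc |a n| * ρ ^ n = |a n| * |ρ| ^ n := by rw [abs_of_pos hρpos]
            _ = |a n * ρ ^ n| := by rw [abs_mul, abs_pow]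
            _ ≤ u n := hbound n ρ (le_of_eq (abs_of_pos hρpos))
  -- analyticity of F
  set b : ℕ → ℝ := fun n => match n with
    | 0 => 0
    | m + 1 => a m / ((m : ℝ) + 1) with hb
  have hFanalytic : AnalyticAt ℝ F 0 := by
    refine ⟨FormalMultilinearSeries.ofScalars ℝ b, hasFPowerSeriesAt_iff.2 ?_⟩
    filter_upwards [Metric.ball_mem_nhds (0 : ℝ) hδpos] with z hz
    have hz' : |z| < δ := by simpa [Real.dist_eq] using hz
    have hcoeff : ∀ n, (FormalMultilinearSeries.ofScalars ℝ b).coeff n = b n := by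
      intro n
      have h0 : (FormalMultilinearSeries.ofScalars ℝ b).coeff n
          = (FormalMultilinearSeries.ofScalars ℝ b) n (fun _ => (1 : ℝ)) := rfl
      rw [h0, FormalMultilinearSeries.ofScalars_apply_eq]
      simp
    have hsumg : HasSum (fun n => g n z) (F z) :=
      (hgsummable z (le_of_lt (lt_of_lt_of_le hz' (min_le_left _ _)))).hasSum
    have h1 : HasSum (fun n => z ^ (n + 1) • b (n + 1)) (F z) := by
      have he : (fun n => z ^ (n + 1) • b (n + 1)) = fun n => g n z := by
        funext n
        show z ^ (n + 1) * (a n / ((n : ℝ) + 1)) = a n / ((n : ℝ) + 1) * z ^ (n + 1)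
        ring
      rw [he]; exact hsumg
    have h2 := (hasSum_nat_add_iff (f := fun n => z ^ n • b n) 1).1 h1
    simp only [Finset.range_one, Finset.sum_singleton, pow_zero, one_smul] at h2
    have hb0 : b 0 = 0 := rfl
    rw [hb0, add_zero] at h2
    have he2 : (fun n => z ^ n • (FormalMultilinearSeries.ofScalars ℝ b).coeff n)
        = fun n => z ^ n • b n := by
      funext n; rw [hcoeff n]
    simp only [zero_add, he2]
    exact h2
  have hF0 : F 0 = 0 := by
    have h1 : ∀ n, g n 0 = 0 := fun n => by simp [hg']
    show (∑' n, g n 0) = 0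
    simp [h1]
  refine ⟨F, hFanalytic, hF0, ?_⟩
  filter_upwards [Ioo_mem_nhds (by linarith : -δ < 0) hδpos] with x hx
  exact hFderiv x hx

lemma integrand_analytic (p : ℕ) (hp : 2 ≤ p) :
    AnalyticAt ℝ (fun t : ℝ => (1 - t ^ p) ^ (-(((p : ℝ) - 1) / p))) 0 := by
  set y : ℝ := -(((p : ℝ) - 1) / p) with hy
  have hH : AnalyticAt ℂ (fun z : ℂ => (1 - z ^ p) ^ ((y : ℝ) : ℂ)) 0 := by
    apply AnalyticAt.cpow (analyticAt_const.sub (analyticAt_id.pow p)) analyticAt_const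
    simp only [Pi.sub_apply, Pi.pow_apply, id_eq, zero_pow (by omega : p ≠ 0), sub_zero]
    exact Complex.one_mem_slitPlane
  have h1 : AnalyticAt ℝ (fun t : ℝ => ((1 - (t : ℂ) ^ p) ^ ((y : ℝ) : ℂ)).re) 0 := by
    have hR : AnalyticAt ℝ (fun z : ℂ => (1 - z ^ p) ^ ((y : ℝ) : ℂ)) 0 := hH.restrictScalars
    have hofReal : AnalyticAt ℝ (fun t : ℝ => (t : ℂ)) 0 := Complex.ofRealCLM.analyticAt 0
    have hcomp : AnalyticAt ℝ ((fun z : ℂ => (1 - z ^ p) ^ ((y : ℝ) : ℂ)) ∘ fun t : ℝ => (t : ℂ)) 0 := by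
      apply AnalyticAt.comp _ hofReal
      simpa using hR
    exact (Complex.reCLM.analyticAt _).comp hcomp
  apply h1.congr
  filter_upwards [Metric.ball_mem_nhds (0 : ℝ) one_pos] with t ht
  have ht1 : |t| < 1 := by simpa [Real.dist_eq] using ht
  have hpos : (0 : ℝ) < 1 - t ^ p := by
    have h2 : t ^ p ≤ |t| ^ p := by
      rw [← abs_pow]; exact le_abs_self _
    have h3 : |t| ^ p < 1 := pow_lt_one₀ (abs_nonneg t) ht1 (by omega)
    linarith
  have hcast : (1 - (t : ℂ) ^ p) = (((1 - t ^ p : ℝ)) : ℂ) := by push_cast; ring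
  rw [hcast, ← Complex.ofReal_cpow hpos.le y]
  simp

/-- For an integer `p ≥ 2`, the local inverse `sin_p` at `0` of
`arcsin_p(x) = ∫_0^x (1-t^p)^(-(p-1)/p) dt` exists and is analytic at `0`. -/
theorem sinp_analyticAt (p : ℕ) (hp : 2 ≤ p)
    (f : ℝ → ℝ)
    (hf : f = fun x : ℝ => ∫ t in (0 : ℝ)..x, (1 - t ^ p) ^ (-(((p : ℝ) - 1) / p))) :
    ∃ g : ℝ → ℝ, AnalyticAt ℝ g 0 ∧ g 0 = 0 ∧ ∀ᶠ x in nhds (0 : ℝ), f (g x) = x := by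
  subst hf
  set y : ℝ := -(((p : ℝ) - 1) / p) with hy
  set h : ℝ → ℝ := fun t => (1 - t ^ p) ^ y with hh
  have hAh : AnalyticAt ℝ h 0 := integrand_analytic p hp
  obtain ⟨F, hFa, hF0, hFd⟩ := exists_primitive_analytic h hAh
  set f : ℝ → ℝ := fun x => ∫ t in (0 : ℝ)..x, h t with hfdef
  obtain ⟨δ₀, hδ₀, hD⟩ := Metric.eventually_nhds_iff.1 hFd
  set δ : ℝ := min δ₀ 1 with hδ
  have hδpos : 0 < δ := lt_min hδ₀ one_pos
  have hcontAt : ∀ t : ℝ, |t| < 1 → ContinuousAt h t := by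
    intro t ht
    have hpos : (0 : ℝ) < 1 - t ^ p := by
      have h2 : t ^ p ≤ |t| ^ p := by rw [← abs_pow]; exact le_abs_self _
      have h3 : |t| ^ p < 1 := pow_lt_one₀ (abs_nonneg t) ht (by omega)
      linarith
    have hc1 : ContinuousAt (fun s : ℝ => 1 - s ^ p) t :=
      (continuous_const.sub (continuous_pow p)).continuousAt
    have hc2 : ContinuousAt (fun x : ℝ => x ^ y) (1 - t ^ p) :=
      Real.continuousAt_rpow_const _ _ (Or.inl hpos.ne')
    exact ContinuousAt.comp (g := fun x : ℝ => x ^ y) (f := fun s : ℝ => 1 - s ^ p)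
      (x := t) hc2 hc1
  have hfF : f =ᶠ[𝓝 0] F := by
    filter_upwards [Metric.ball_mem_nhds (0 : ℝ) hδpos] with x hx
    have hx' : |x| < δ := by simpa [Real.dist_eq] using hx
    have hsub : ∀ t ∈ Set.uIcc (0 : ℝ) x, |t| < δ := by
      intro t htmem
      rw [abs_lt] at hx' ⊢
      rcases Set.mem_uIcc.1 htmem with h1 | h1
      · exact ⟨by linarith [h1.1], by linarith [h1.2]⟩
      · exact ⟨by linarith [h1.1], by linarith [h1.2]⟩
    have hint : IntervalIntegrable h MeasureTheory.volume 0 x := by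
      apply ContinuousOn.intervalIntegrable
      intro t htmem
      exact (hcontAt t (lt_of_lt_of_le (hsub t htmem) (min_le_right _ _))).continuousWithinAt
    have heq : ∫ t in (0 : ℝ)..x, h t = F x - F 0 := by
      apply intervalIntegral.integral_eq_sub_of_hasDerivAt
      · intro t htmem
        apply hD
        rw [Real.dist_eq, sub_zero]
        exact lt_of_lt_of_le (hsub t htmem) (min_le_left _ _)
      · exact hint
    show (∫ t in (0 : ℝ)..x, h t) = F x
    rw [heq, hF0, sub_zero]
  have hfa : AnalyticAt ℝ f 0 := hFa.congr hfF.symm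
  have hf0 : f 0 = 0 := intervalIntegral.integral_same
  have hh0 : h 0 = 1 := by
    show (1 - (0 : ℝ) ^ p) ^ y = 1
    simp [zero_pow (by omega : p ≠ 0)]
  have hdf : HasDerivAt f 1 0 := by
    have h1 : HasDerivAt F (h 0) 0 := hFd.self_of_nhds
    rw [hh0] at h1
    exact h1.congr_of_eventuallyEq hfF
  have hstrict : HasStrictDerivAt f 1 0 := by
    have h1 := (hfa.contDiffAt : ContDiffAt ℝ 1 f 0).hasStrictDerivAt one_ne_zero
    rwa [hdf.deriv] at h1
  have hsf := hstrict.hasStrictFDerivAt_equiv one_ne_zero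
  set Φ := hsf.toOpenPartialHomeomorph f with hΦ
  obtain ⟨P, hP⟩ := hfa
  have hP1coeff : P.coeff 1 = 1 := by
    have h1 := hP.deriv
    rw [hdf.deriv] at h1
    exact h1.symm
  have hP1 : P 1 = (continuousMultilinearCurryFin1 ℝ ℝ ℝ).symm
      ((ContinuousLinearEquiv.unitsEquivAut ℝ (Units.mk0 (1 : ℝ) one_ne_zero) : ℝ ≃L[ℝ] ℝ) :
        ℝ →L[ℝ] ℝ) := by
    apply ContinuousMultilinearMap.ext
    intro m
    have hm : m = fun _ => m 0 := by
      funext i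
      congr 1
      exact Subsingleton.elim i 0
    rw [hm, FormalMultilinearSeries.apply_eq_pow_smul_coeff, hP1coeff]
    simp [ContinuousLinearEquiv.unitsEquivAut]
  have hΦ0 : Φ 0 = 0 := hf0
  have hsymm := Φ.hasFPowerSeriesAt_symm hsf.mem_toOpenPartialHomeomorph_source hP hP1
  refine ⟨Φ.symm, ?_, ?_, ?_⟩
  · rw [hΦ0] at hsymm
    exact ⟨_, hsymm⟩
  · have h1 := Φ.left_inv hsf.mem_toOpenPartialHomeomorph_source
    rwa [hΦ0] at h1
  · have h1 := hsf.eventually_right_inverse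
    rw [hf0] at h1
    exact h1
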